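/- Let L > 0 and set λ = (2π/L)⁴. For any two twice continuously differentiable L-periodic mean-zero functions u, v : ℝ → ℝ and any t ∈ [0,1], the energy φ satisfies the λ-convexity inequality φ((1−t)u + t v) ≤ (1−t)φ(u) + t φ(v) − (λ/2) t(1−t) ∫₀ᴸ (u(x) − v(x))² dx. -/

import Mathlib

open MeasureTheory Real Complex intervalIntegral AddCircle
open MeasureTheory Real Complex intervalIntegral AddCircle

lemma parseval_cont (L : ℝ) [hL : Fact (0 < L)] (F : C(AddCircle L, ℂ)) :
    (∑' n : ℤ, ‖fourierCoeff (F : AddCircle L → ℂ) n‖^2 = (1/L) * ∫ x in (0:ℝ)..L, ‖F (x : AddCircle L)‖^2)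
    ∧ Summable (fun n : ℤ => ‖fourierCoeff (F : AddCircle L → ℂ) n‖^2) := by
  set g := ContinuousMap.toLp (E := ℂ) 2 haarAddCircle ℂ F with hg
  have h1 : ∑' n : ℤ, ‖fourierCoeff (g : AddCircle L → ℂ) n‖^2
      = ∫ t : AddCircle L, ‖g t‖^2 ∂haarAddCircle := tsum_sq_fourierCoeff g
  have hcoe : ∀ n, fourierCoeff (g : AddCircle L → ℂ) n = fourierCoeff (F : AddCircle L → ℂ) n :=
    fun n => fourierCoeff_toLp F n
  have h2 : ∫ t : AddCircle L, ‖g t‖^2 ∂haarAddCircle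
      = ∫ t : AddCircle L, ‖F t‖^2 ∂haarAddCircle := by
    refine integral_congr_ae ?_
    filter_upwards [ContinuousMap.coeFn_toLp (p := 2) (𝕜 := ℂ) haarAddCircle F] with t ht
    rw [ht]
  have h3 : ∫ t : AddCircle L, ‖F t‖^2 ∂(volume)
      = L * ∫ t : AddCircle L, ‖F t‖^2 ∂haarAddCircle := by
    rw [volume_eq_smul_haarAddCircle, MeasureTheory.integral_smul_measure,
      ENNReal.toReal_ofReal hL.out.le, smul_eq_mul]
  have h4 : ∫ t : AddCircle L, ‖F t‖^2 ∂(volume) = ∫ x in (0:ℝ)..0+L, ‖F (x:AddCircle L)‖^2 :=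
    (AddCircle.intervalIntegral_preimage L 0 _).symm
  constructor
  · simp_rw [← hcoe, h1, h2]
    rw [zero_add] at h4
    rw [← h4, h3]
    field_simp [hL.out.ne']
  · have h5 := lp.memℓp (fourierBasis.repr g)
    rw [memℓp_gen_iff (p := 2) (by norm_num)] at h5
    simp_rw [fourierBasis_repr, hcoe] at h5
    refine h5.congr ?_
    intro n
    norm_num

lemma wirtinger (L : ℝ) (hL : 0 < L) (f : ℝ → ℝ) (hf : ContDiff ℝ 1 f)
    (hp : Function.Periodic f L) (hm : ∫ x in (0:ℝ)..L, f x = 0) :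
    (2*π/L)^2 * ∫ x in (0:ℝ)..L, f x ^ 2 ≤ ∫ x in (0:ℝ)..L, (deriv f x)^2 := by
  haveI : Fact (0 < L) := ⟨hL⟩
  set fc : ℝ → ℂ := fun x => (f x : ℂ) with hfc
  set gc : ℝ → ℂ := fun x => ((deriv f x : ℝ) : ℂ) with hgc
  have hfcont : Continuous f := hf.continuous
  have hgcont : Continuous (deriv f) := hf.continuous_deriv le_rfl
  have hfccont : Continuous fc := Complex.continuous_ofReal.comp hfcont
  have hgccont : Continuous gc := Complex.continuous_ofReal.comp hgcont
  have hb : (0:ℝ) < 0 + L := by linarith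
  -- continuous lifts
  have hFcont : Continuous (AddCircle.liftIco L 0 fc) :=
    AddCircle.liftIco_zero_continuous (by simp [hfc, hp.eq.symm, (hp 0)]) hfccont.continuousOn
  have hpd : Function.Periodic (deriv f) L := by
    intro x
    have hcomp : (fun y => f (y + L)) = f := funext fun y => hp y
    calc deriv f (x + L) = deriv (fun y => f (y + L)) x := (deriv_comp_add_const f L x).symm
    _ = deriv f x := by rw [hcomp]
  have hGcont : Continuous (AddCircle.liftIco L 0 gc) :=
    AddCircle.liftIco_zero_continuous (by simp [hgc, (hpd 0).symm]) hgccont.continuousOn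
  set F : C(AddCircle L, ℂ) := ⟨AddCircle.liftIco L 0 fc, hFcont⟩ with hF
  set G : C(AddCircle L, ℂ) := ⟨AddCircle.liftIco L 0 gc, hGcont⟩ with hG
  have hcF : ∀ n, fourierCoeff (F : AddCircle L → ℂ) n = fourierCoeffOn hb fc n := by
    intro n
    have := fourierCoeff_liftIco_eq (T := L) (a := (0:ℝ)) fc n
    simpa [hF] using this
  have hcG : ∀ n, fourierCoeff (G : AddCircle L → ℂ) n = fourierCoeffOn hb gc n := by
    intro n
    have := fourierCoeff_liftIco_eq (T := L) (a := (0:ℝ)) gc n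
    simpa [hG] using this
  -- zeroth coefficient vanishes
  have hintfc : ∫ x in (0:ℝ)..0+L, fc x = 0 := by
    rw [hfc, intervalIntegral.integral_ofReal, zero_add, hm, Complex.ofReal_zero]
  have hc0 : fourierCoeffOn hb fc 0 = 0 := by
    rw [fourierCoeffOn_eq_integral]
    simp only [neg_zero, fourier_zero, one_smul, hintfc, smul_zero]
  -- coefficient relation
  have hderiv : ∀ x ∈ Set.uIcc (0:ℝ) (0+L), HasDerivAt fc (gc x) x := by
    intro x _
    exact ((hf.differentiable one_ne_zero).differentiableAt.hasDerivAt).ofReal_comp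
  have hgint : IntervalIntegrable gc volume 0 (0+L) := hgccont.intervalIntegrable _ _
  have hnormrel : ∀ n : ℤ, (2*π/L)^2 * ‖fourierCoeffOn hb fc n‖^2 ≤ ‖fourierCoeffOn hb gc n‖^2 := by
    intro n
    rcases eq_or_ne n 0 with rfl | hn
    · rw [hc0, norm_zero]
      have h0 : (2*π/L)^2 * (0:ℝ)^2 = 0 := by ring
      rw [h0]
      positivity
    · have h := fourierCoeffOn_of_hasDerivAt hb hn hderiv hgint
      have hfL : fc (0+L) - fc 0 = 0 := by
        have h0 := hp 0
        rw [zero_add] at h0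
        simp [hfc, h0]
      rw [hfL, mul_zero, zero_sub] at h
      have hn1 : (1:ℝ) ≤ |(n:ℝ)| := by
        rw [← Int.cast_abs]
        exact_mod_cast Int.one_le_abs hn
      have hnormeq : ‖fourierCoeffOn hb fc n‖
          = 1/(2*π*|(n:ℝ)|) * (L * ‖fourierCoeffOn hb gc n‖) := by
        rw [h, norm_mul, norm_neg, norm_mul]
        congr 1
        · rw [norm_div, norm_one, norm_mul, norm_mul, norm_mul]
          simp [abs_of_pos pi_pos]
        · congr 1
          simp [abs_of_pos hL]
      rw [hnormeq]
      set c := ‖fourierCoeffOn hb gc n‖ with hcdef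
      have hc : 0 ≤ c := norm_nonneg _
      have key : (2*π/L) * (1 / (2*π*|(n:ℝ)|) * L) ≤ 1 := by
        have h1 : (2*π/L) * (1 / (2*π*|(n:ℝ)|) * L) = (2*π)/(2*π*|(n:ℝ)|) * (L/L) := by
          ring
        rw [h1, div_self hL.ne', mul_one]
        rw [div_le_one (by positivity)]
        nlinarith [pi_pos]
      calc (2*π/L)^2 * (1 / (2*π*|(n:ℝ)|) * (L * c))^2
          = ((2*π/L) * (1 / (2*π*|(n:ℝ)|) * L))^2 * c^2 := by ring
        _ ≤ 1^2 * c^2 := by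
            apply mul_le_mul_of_nonneg_right _ (by positivity)
            apply pow_le_pow_left₀ (by positivity) key
        _ = c^2 := by ring
  obtain ⟨hPF, hSF⟩ := parseval_cont L F
  obtain ⟨hPG, hSG⟩ := parseval_cont L G
  have h0Ico : (0:ℝ) ∈ Set.Ico (0:ℝ) (0+L) := ⟨le_refl _, by simpa using hL⟩
  have hfper : f L = f 0 := by
    have := hp 0; rwa [zero_add] at this
  have hgper : deriv f L = deriv f 0 := by
    have := hpd 0; rwa [zero_add] at this
  have hFeq : (∫ x in (0:ℝ)..L, ‖F (x:AddCircle L)‖^2) = ∫ x in (0:ℝ)..L, f x ^2 := by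
    refine intervalIntegral.integral_congr ?_
    intro x hx
    rw [Set.uIcc_of_le hL.le] at hx
    rcases lt_or_eq_of_le hx.2 with h | h
    · have hx' : x ∈ Set.Ico (0:ℝ) (0+L) := ⟨hx.1, by rwa [zero_add]⟩
      simp only [hF, ContinuousMap.coe_mk, AddCircle.liftIco_coe_apply hx', hfc]
      simp [_root_.sq_abs]
    · have hcoe : ((L:ℝ) : AddCircle L) = ((0:ℝ) : AddCircle L) := by
        simp [AddCircle.coe_period]
      simp only [h]
      rw [hcoe]
      simp only [hF, ContinuousMap.coe_mk, AddCircle.liftIco_coe_apply h0Ico, hfc]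
      simp [_root_.sq_abs, hfper]
  have hGeq : (∫ x in (0:ℝ)..L, ‖G (x:AddCircle L)‖^2) = ∫ x in (0:ℝ)..L, (deriv f x) ^2 := by
    refine intervalIntegral.integral_congr ?_
    intro x hx
    rw [Set.uIcc_of_le hL.le] at hx
    rcases lt_or_eq_of_le hx.2 with h | h
    · have hx' : x ∈ Set.Ico (0:ℝ) (0+L) := ⟨hx.1, by rwa [zero_add]⟩
      simp only [hG, ContinuousMap.coe_mk, AddCircle.liftIco_coe_apply hx', hgc]
      simp [_root_.sq_abs]
    · have hcoe : ((L:ℝ) : AddCircle L) = ((0:ℝ) : AddCircle L) := by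
        simp [AddCircle.coe_period]
      simp only [h]
      rw [hcoe]
      simp only [hG, ContinuousMap.coe_mk, AddCircle.liftIco_coe_apply h0Ico, hgc]
      simp [_root_.sq_abs, hgper]
  have hle := Summable.tsum_le_tsum (f := fun n : ℤ => (2*π/L)^2 * ‖fourierCoeff (F : AddCircle L → ℂ) n‖^2)
    (g := fun n : ℤ => ‖fourierCoeff (G : AddCircle L → ℂ) n‖^2)
    (fun n => by simpa only [hcF, hcG] using hnormrel n) (hSF.mul_left _) hSG
  rw [tsum_mul_left, hPF, hPG, hFeq, hGeq] at hle
  have hfin := mul_le_mul_of_nonneg_left hle hL.le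
  calc (2*π/L)^2 * ∫ x in (0:ℝ)..L, f x ^ 2
      = L * ((2*π/L)^2 * (1/L * ∫ x in (0:ℝ)..L, f x ^ 2)) := by
        field_simp
    _ ≤ L * (1/L * ∫ x in (0:ℝ)..L, (deriv f x)^2) := hfin
    _ = ∫ x in (0:ℝ)..L, (deriv f x)^2 := by field_simp

lemma cosh_strong_convex (a b t : ℝ) (ht0 : 0 ≤ t) (ht1 : t ≤ 1) :
    Real.cosh ((1-t)*a + t*b)
      ≤ (1-t)*Real.cosh a + t*Real.cosh b - (1/2)*(t*(1-t))*(a-b)^2 := by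
  set h : ℝ → ℝ := fun x => Real.cosh x - x^2/2 with hh
  have hd1 : deriv h = fun x => Real.sinh x - x := by
    funext x
    rw [hh]
    rw [deriv_fun_sub (Real.differentiable_cosh x) (by fun_prop)]
    rw [Real.deriv_cosh]
    simp [deriv_div_const]
  have hconv : ConvexOn ℝ Set.univ h := by
    apply convexOn_of_deriv2_nonneg' convex_univ
    · exact (Real.differentiable_cosh.sub (by fun_prop)).differentiableOn
    · rw [hd1]
      exact (Real.differentiable_sinh.sub differentiable_id).differentiableOn
    · intro x _
      have : deriv^[2] h x = Real.cosh x - 1 := by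
        simp only [Function.iterate_succ, Function.iterate_zero, Function.comp_apply, id]
        rw [hd1]
        rw [deriv_fun_sub (Real.differentiable_sinh x) differentiableAt_fun_id]
        simp [Real.deriv_sinh]
      rw [this]
      linarith [Real.one_le_cosh x]
  have key := hconv.2 (Set.mem_univ a) (Set.mem_univ b) (by linarith : (0:ℝ) ≤ 1 - t) ht0 (by ring)
  simp only [smul_eq_mul, hh] at key
  nlinarith [key]

lemma periodic_deriv_of_periodic (f : ℝ → ℝ) (L : ℝ) (hp : Function.Periodic f L) :
    Function.Periodic (deriv f) L := by
  intro x
  have hcomp : (fun y => f (y + L)) = f := funext fun y => hp y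
  calc deriv f (x + L) = deriv (fun y => f (y + L)) x := (deriv_comp_add_const f L x).symm
  _ = deriv f x := by rw [hcomp]

/-- λ-convexity of the energy φ(g) = ∫₀ᴸ cosh(g'') with
λ = (2π/L)⁴, for C² L-periodic mean-zero functions. -/
theorem lambda_convexity_of_energy
    (L : ℝ) (hL : 0 < L)
    (u v : ℝ → ℝ)
    (hu : ContDiff ℝ 2 u) (hup : Function.Periodic u L)
    (hum : ∫ x in (0:ℝ)..L, u x = 0)
    (hv : ContDiff ℝ 2 v) (hvp : Function.Periodic v L)
    (hvm : ∫ x in (0:ℝ)..L, v x = 0)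
    (t : ℝ) (ht : t ∈ Set.Icc (0:ℝ) 1) :
    (∫ x in (0:ℝ)..L,
        Real.cosh (deriv (deriv (fun y => (1 - t) * u y + t * v y)) x))
      ≤ (1 - t) * (∫ x in (0:ℝ)..L, Real.cosh (deriv (deriv u) x))
        + t * (∫ x in (0:ℝ)..L, Real.cosh (deriv (deriv v) x))
        - ((2 * Real.pi / L) ^ 4 / 2) * t * (1 - t)
            * ∫ x in (0:ℝ)..L, (u x - v x) ^ 2 := by
  obtain ⟨ht0, ht1⟩ := ht
  have hud : Differentiable ℝ u := hu.differentiable two_ne_zero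
  have hvd : Differentiable ℝ v := hv.differentiable two_ne_zero
  have hu1 : ContDiff ℝ 1 (deriv u) := (contDiff_succ_iff_deriv.mp (by exact_mod_cast hu)).2.2
  have hv1 : ContDiff ℝ 1 (deriv v) := (contDiff_succ_iff_deriv.mp (by exact_mod_cast hv)).2.2
  have hud' : Differentiable ℝ (deriv u) := hu1.differentiable one_ne_zero
  have hvd' : Differentiable ℝ (deriv v) := hv1.differentiable one_ne_zero
  have hucd : Continuous (deriv (deriv u)) := hu1.continuous_deriv le_rfl
  have hvcd : Continuous (deriv (deriv v)) := hv1.continuous_deriv le_rfl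
  -- second derivative of the convex combination
  have hD1 : deriv (fun y => (1-t)*u y + t*v y) = fun x => (1-t)*deriv u x + t*deriv v x := by
    funext x
    rw [deriv_fun_add ((hud x).const_mul _) ((hvd x).const_mul _),
      deriv_const_mul _ (hud x), deriv_const_mul _ (hvd x)]
  have hD2 : deriv (deriv (fun y => (1-t)*u y + t*v y))
      = fun x => (1-t)*deriv (deriv u) x + t*deriv (deriv v) x := by
    rw [hD1]
    funext x
    rw [deriv_fun_add ((hud' x).const_mul _) ((hvd' x).const_mul _),
      deriv_const_mul _ (hud' x), deriv_const_mul _ (hvd' x)]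
  -- continuity of integrands
  have hcontL : Continuous (fun x => Real.cosh (deriv (deriv (fun y => (1-t)*u y + t*v y)) x)) := by
    rw [hD2]
    exact Real.continuous_cosh.comp ((continuous_const.mul hucd).add (continuous_const.mul hvcd))
  have hcoshu : Continuous (fun x => Real.cosh (deriv (deriv u) x)) :=
    Real.continuous_cosh.comp hucd
  have hcoshv : Continuous (fun x => Real.cosh (deriv (deriv v) x)) :=
    Real.continuous_cosh.comp hvcd
  have hsqcont : Continuous (fun x => (deriv (deriv u) x - deriv (deriv v) x)^2) :=
    (hucd.sub hvcd).pow 2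
  have hRHScont : Continuous (fun x => (1-t)*Real.cosh (deriv (deriv u) x)
      + t*Real.cosh (deriv (deriv v) x)
      - (1/2)*(t*(1-t))*(deriv (deriv u) x - deriv (deriv v) x)^2) := by
    exact ((continuous_const.mul hcoshu).add (continuous_const.mul hcoshv)).sub
      (continuous_const.mul hsqcont)
  -- pointwise convexity bound, integrated
  have hmono : (∫ x in (0:ℝ)..L, Real.cosh (deriv (deriv (fun y => (1-t)*u y + t*v y)) x))
      ≤ ∫ x in (0:ℝ)..L, ((1-t)*Real.cosh (deriv (deriv u) x)
          + t*Real.cosh (deriv (deriv v) x)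
          - (1/2)*(t*(1-t))*(deriv (deriv u) x - deriv (deriv v) x)^2) := by
    apply intervalIntegral.integral_mono_on hL.le (hcontL.intervalIntegrable _ _)
      (hRHScont.intervalIntegrable _ _)
    intro x _
    rw [hD2]
    exact cosh_strong_convex _ _ t ht0 ht1
  have hsplit : (∫ x in (0:ℝ)..L, ((1-t)*Real.cosh (deriv (deriv u) x)
          + t*Real.cosh (deriv (deriv v) x)
          - (1/2)*(t*(1-t))*(deriv (deriv u) x - deriv (deriv v) x)^2))
      = (1-t) * (∫ x in (0:ℝ)..L, Real.cosh (deriv (deriv u) x))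
        + t * (∫ x in (0:ℝ)..L, Real.cosh (deriv (deriv v) x))
        - (1/2)*(t*(1-t)) * ∫ x in (0:ℝ)..L, (deriv (deriv u) x - deriv (deriv v) x)^2 := by
    rw [intervalIntegral.integral_sub
      (((continuous_const.fun_mul hcoshu).fun_add (continuous_const.fun_mul hcoshv)).intervalIntegrable _ _)
      ((continuous_const.fun_mul hsqcont).intervalIntegrable _ _),
      intervalIntegral.integral_add
      ((continuous_const.fun_mul hcoshu).intervalIntegrable _ _)
      ((continuous_const.fun_mul hcoshv).intervalIntegrable _ _),
      intervalIntegral.integral_const_mul, intervalIntegral.integral_const_mul,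
      intervalIntegral.integral_const_mul]
  -- Wirtinger applied twice to w = u - v
  set w : ℝ → ℝ := fun x => u x - v x with hwdef
  have hw : ContDiff ℝ 2 w := hu.sub hv
  have hwp : Function.Periodic w L := hup.sub hvp
  have hwd : Differentiable ℝ w := hw.differentiable two_ne_zero
  have hwm : ∫ x in (0:ℝ)..L, w x = 0 := by
    rw [hwdef]
    rw [intervalIntegral.integral_sub ((hu.continuous.intervalIntegrable _ _))
      ((hv.continuous.intervalIntegrable _ _)), hum, hvm, sub_zero]
  have hw1 : ContDiff ℝ 1 (deriv w) := (contDiff_succ_iff_deriv.mp (by exact_mod_cast hw)).2.2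
  have hwp' : Function.Periodic (deriv w) L := periodic_deriv_of_periodic w L hwp
  have hwm' : ∫ x in (0:ℝ)..L, deriv w x = 0 := by
    rw [intervalIntegral.integral_deriv_eq_sub (fun x _ => (hwd x))
      ((hw.continuous_deriv one_le_two).intervalIntegrable _ _)]
    rw [show w L = w 0 by simpa using (hwp 0)]
    ring
  have W1 := wirtinger L hL w (hw.of_le one_le_two) hwp hwm
  have W2 := wirtinger L hL (deriv w) hw1 hwp' hwm'
  have hchain : (2*Real.pi/L)^4 * ∫ x in (0:ℝ)..L, (u x - v x)^2
      ≤ ∫ x in (0:ℝ)..L, (deriv (deriv u) x - deriv (deriv v) x)^2 := by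
    have hw2eq : deriv (deriv w) = fun x => deriv (deriv u) x - deriv (deriv v) x := by
      have hD1w : deriv w = fun x => deriv u x - deriv v x := by
        funext x
        exact deriv_fun_sub (hud x) (hvd x)
      rw [hD1w]
      funext x
      exact deriv_fun_sub (hud' x) (hvd' x)
    have hI : (∫ x in (0:ℝ)..L, (deriv (deriv w) x)^2)
        = ∫ x in (0:ℝ)..L, (deriv (deriv u) x - deriv (deriv v) x)^2 := by
      rw [hw2eq]
    have hpos : (0:ℝ) ≤ (2*Real.pi/L)^2 := sq_nonneg _
    calc (2*Real.pi/L)^4 * ∫ x in (0:ℝ)..L, (u x - v x)^2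
        = (2*Real.pi/L)^2 * ((2*Real.pi/L)^2 * ∫ x in (0:ℝ)..L, w x ^ 2) := by
          simp only [hwdef]; ring
      _ ≤ (2*Real.pi/L)^2 * ∫ x in (0:ℝ)..L, (deriv w x)^2 :=
          mul_le_mul_of_nonneg_left W1 hpos
      _ ≤ ∫ x in (0:ℝ)..L, (deriv (deriv w) x)^2 := W2
      _ = _ := hI
  have hsq0 : (0:ℝ) ≤ ∫ x in (0:ℝ)..L, (u x - v x)^2 := by
    apply intervalIntegral.integral_nonneg hL.le
    intro x _
    positivity
  have htt : (0:ℝ) ≤ t*(1-t) := mul_nonneg ht0 (by linarith)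
  calc (∫ x in (0:ℝ)..L, Real.cosh (deriv (deriv (fun y => (1-t)*u y + t*v y)) x))
      ≤ (1-t) * (∫ x in (0:ℝ)..L, Real.cosh (deriv (deriv u) x))
        + t * (∫ x in (0:ℝ)..L, Real.cosh (deriv (deriv v) x))
        - (1/2)*(t*(1-t)) * ∫ x in (0:ℝ)..L, (deriv (deriv u) x - deriv (deriv v) x)^2 := by
        rw [← hsplit]; exact hmono
    _ ≤ (1 - t) * (∫ x in (0:ℝ)..L, Real.cosh (deriv (deriv u) x))
        + t * (∫ x in (0:ℝ)..L, Real.cosh (deriv (deriv v) x))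
        - ((2 * Real.pi / L) ^ 4 / 2) * t * (1 - t)
            * ∫ x in (0:ℝ)..L, (u x - v x) ^ 2 := by
        have h2 := mul_le_mul_of_nonneg_left hchain (by linarith : (0:ℝ) ≤ (1/2)*(t*(1-t)))
        nlinarith [h2]
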